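/- Let μ* be a detectable probability measure on ℝ^q with exponent α, and let I_n = sup_{z ∈ supp(μ*)} ∫ Φ_n(z,y)² dμ*(y), where Φ_n is a kernel satisfying: Φ_n(x,y)² ≤ κ₄ n^{2q}/max(1,(n|x−y|_∞)^S) for S > α, and ∫ Φ_n(x,y)² dμ*(y) ≥ n^{2q−α}/C₄ for x ∈ supp(μ*). Fix θ with 0 < θ ≤ min((4C₃C₄)^{−1}, C₃C₄), where C₃ is the constant from the annulus-integral estimate ∫_{ℝ^q∖B(x,d)} Φ_n(x,y)² dμ*(y) ≤ C₃ n^{2q−α}(nd)^{α−S} for d ≥ 1/n. Define S_n(θ) = {x ∈ ℝ^q : ∫ Φ_n(x,y)² dμ*(y) ≥ 4θ I_n} and d(θ) = (C₃C₄/θ)^{1/(S−α)}. Then supp(μ*) ⊆ S_n(θ) ⊆ {x ∈ ℝ^q : dist(x, supp(μ*)) ≤ d(θ)/n}, where dist is with respect to the ℓ^∞ norm. -/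

import Mathlib

open MeasureTheory Metric

/-- The support of a measure: points all of whose closed balls have positive measure. -/
def msupport {X : Type*} [MeasurableSpace X] [PseudoMetricSpace X] (μ : Measure X) : Set X :=
  {x | ∀ r : ℝ, 0 < r → 0 < μ (Metric.closedBall x r)}

/-- support detection.  supp(μ) ⊆ S_n(θ) ⊆ {dist(·, supp μ) ≤ d(θ)/n}. -/
theorem stmt8 (q : ℕ) (hq : 1 ≤ q)
    (μ : Measure (Fin q → ℝ)) [IsProbabilityMeasure μ]
    (Φ : (Fin q → ℝ) → (Fin q → ℝ) → ℝ)
    (hΦmeas : ∀ x, Measurable (Φ x))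
    (n α S θ C₃ C₄ κ κ₄ : ℝ)
    (hn : 1 ≤ n) (hα : 0 ≤ α) (hS : α < S) (hC₃ : 0 < C₃) (hC₄ : 0 < C₄)
    (hκ : 0 < κ) (hκ₄ : 0 < κ₄)
    (hsupp : msupport μ ⊆ Metric.closedBall 0 (κ * n))
    (hθ : 0 < θ) (hθ2 : θ ≤ min ((4 * C₃ * C₄)⁻¹) (C₃ * C₄))
    (hdecay : ∀ x y, (Φ x y) ^ 2 ≤ κ₄ * n ^ (2 * (q : ℝ)) / max 1 ((n * dist x y) ^ S))
    (hlow : ∀ x ∈ msupport μ, n ^ (2 * (q : ℝ) - α) / C₄ ≤ ∫ y, (Φ x y) ^ 2 ∂μ)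
    (hupper : ∀ x : Fin q → ℝ, ∫ y, (Φ x y) ^ 2 ∂μ ≤ C₃ * n ^ (2 * (q : ℝ) - α))
    (hannulus : ∀ (x : Fin q → ℝ) (d : ℝ), 1 / n ≤ d →
      ∫ y in (Metric.closedBall x d)ᶜ, (Φ x y) ^ 2 ∂μ ≤
        C₃ * n ^ (2 * (q : ℝ) - α) * (n * d) ^ (α - S)) :
    msupport μ ⊆
      {x | 4 * θ * (⨆ z : msupport μ, ∫ y, (Φ z.1 y) ^ 2 ∂μ) ≤ ∫ y, (Φ x y) ^ 2 ∂μ} ∧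
    {x | 4 * θ * (⨆ z : msupport μ, ∫ y, (Φ z.1 y) ^ 2 ∂μ) ≤ ∫ y, (Φ x y) ^ 2 ∂μ} ⊆
      {x | Metric.infDist x (msupport μ) ≤ (C₃ * C₄ / θ) ^ ((1 : ℝ) / (S - α)) / n} := by
  have hn0 : (0:ℝ) < n := lt_of_lt_of_le one_pos hn
  set P : ℝ := 2 * (q : ℝ) - α with hPdef
  have hP : (0:ℝ) < n ^ P := Real.rpow_pos_of_pos hn0 _
  have hθ1 : θ ≤ (4 * C₃ * C₄)⁻¹ := le_trans hθ2 (min_le_left _ _)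
  have hθc : θ ≤ C₃ * C₄ := le_trans hθ2 (min_le_right _ _)
  have hbdd : BddAbove (Set.range fun z : msupport μ => ∫ y, (Φ z.1 y) ^ 2 ∂μ) := by
    refine ⟨C₃ * n ^ P, ?_⟩
    rintro _ ⟨z, rfl⟩
    exact hupper z.1
  constructor
  · intro x hx
    have hne : Nonempty (msupport μ) := ⟨⟨x, hx⟩⟩
    have hIle : (⨆ z : msupport μ, ∫ y, (Φ z.1 y) ^ 2 ∂μ) ≤ C₃ * n ^ P :=
      ciSup_le fun z => hupper z.1
    have hI0 : 0 ≤ ⨆ z : msupport μ, ∫ y, (Φ z.1 y) ^ 2 ∂μ :=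
      le_trans (integral_nonneg fun y => sq_nonneg _) (le_ciSup hbdd ⟨x, hx⟩)
    have h1 : 4 * θ * (⨆ z : msupport μ, ∫ y, (Φ z.1 y) ^ 2 ∂μ) ≤ n ^ P / C₄ := by
      have h2 : 4 * θ * (⨆ z : msupport μ, ∫ y, (Φ z.1 y) ^ 2 ∂μ)
          ≤ 4 * (4 * C₃ * C₄)⁻¹ * (C₃ * n ^ P) := by
        apply mul_le_mul (by nlinarith) hIle hI0 (by positivity)
      have h3 : 4 * (4 * C₃ * C₄)⁻¹ * (C₃ * n ^ P) = n ^ P / C₄ := by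
        field_simp
      linarith
    exact le_trans h1 (hlow x hx)
  · intro x hx
    simp only [Set.mem_setOf_eq] at hx ⊢
    rcases (msupport μ).eq_empty_or_nonempty with he | ⟨z, hz⟩
    · rw [he, Metric.infDist_empty]
      positivity
    · set dθ : ℝ := (C₃ * C₄ / θ) ^ ((1 : ℝ) / (S - α)) with hdθdef
      have hSα : 0 < S - α := sub_pos.mpr hS
      have hbase : 1 ≤ C₃ * C₄ / θ := (one_le_div hθ).mpr hθc
      have hdθ1 : 1 ≤ dθ := by
        calc (1:ℝ) = (C₃ * C₄ / θ) ^ (0:ℝ) := (Real.rpow_zero _).symm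
        _ ≤ dθ := Real.rpow_le_rpow_of_exponent_le hbase (by positivity)
      set r : ℝ := dθ / n with hrdef
      have hr : 1 / n ≤ r := by
        rw [hrdef]; gcongr
      by_contra hc
      push_neg at hc
      -- hc : dθ / n < infDist x (msupport μ)
      have hAsupp : ∀ y ∈ Metric.closedBall x r, y ∉ msupport μ := by
        intro y hy hys
        have h1 : infDist x (msupport μ) ≤ dist x y := infDist_le_dist_of_mem hys
        rw [Metric.mem_closedBall, dist_comm] at hy
        exact absurd (h1.trans hy) (not_le.mpr hc)
      -- the closed ball has measure zero
      have hμA : μ (Metric.closedBall x r) = 0 := by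
        have hex : ∀ y : Metric.closedBall x r, ∃ ρ, 0 < ρ ∧ μ (Metric.closedBall y.1 ρ) = 0 := by
          intro y
          have h := hAsupp y.1 y.2
          simp only [msupport, Set.mem_setOf_eq] at h
          push_neg at h
          obtain ⟨ρ, hρ, h0⟩ := h
          exact ⟨ρ, hρ, le_antisymm h0 zero_le⟩
        choose ρ hρpos hρ0 using hex
        have hcover : Metric.closedBall x r ⊆ ⋃ y : Metric.closedBall x r, Metric.ball y.1 (ρ y) :=
          fun w hw => Set.mem_iUnion.2 ⟨⟨w, hw⟩, Metric.mem_ball_self (hρpos _)⟩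
        obtain ⟨t, ht⟩ := (isCompact_closedBall x r).elim_finite_subcover
          (fun y : Metric.closedBall x r => Metric.ball y.1 (ρ y)) (fun y => Metric.isOpen_ball)
          hcover
        refine le_antisymm ?_ zero_le
        calc μ (Metric.closedBall x r) ≤ μ (⋃ y ∈ t, Metric.ball y.1 (ρ y)) := measure_mono ht
        _ ≤ ∑ y ∈ t, μ (Metric.ball y.1 (ρ y)) := measure_biUnion_finset_le _ _
        _ ≤ ∑ y ∈ t, μ (Metric.closedBall y.1 (ρ y)) := by
            exact Finset.sum_le_sum fun y _ => measure_mono Metric.ball_subset_closedBall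
        _ = 0 := by simp [hρ0]
      -- integral over all of space equals integral over complement of the ball
      have hres : μ.restrict (Metric.closedBall x r)ᶜ = μ := by
        have h2 : μ ((Metric.closedBall x r)ᶜ)ᶜ = 0 := by rwa [compl_compl]
        exact Measure.restrict_eq_self_of_ae_mem (mem_ae_iff.2 h2)
      have hint : ∫ y, (Φ x y) ^ 2 ∂μ = ∫ y in (Metric.closedBall x r)ᶜ, (Φ x y) ^ 2 ∂μ := by
        rw [hres]
      -- upper bound by annulus estimate
      have hnr : n * r = dθ := mul_div_cancel₀ dθ hn0.ne'
      have hdpow : dθ ^ (α - S) = θ / (C₃ * C₄) := by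
        have h0 : (0:ℝ) ≤ C₃ * C₄ / θ := by positivity
        have : dθ ^ (α - S) = (C₃ * C₄ / θ) ^ (((1:ℝ) / (S - α)) * (α - S)) := by
          rw [hdθdef, ← Real.rpow_mul h0]
        rw [this]
        have hexp : ((1:ℝ) / (S - α)) * (α - S) = -1 := by
          field_simp; ring
        rw [hexp, Real.rpow_neg_one, inv_div]
      have hup : ∫ y, (Φ x y) ^ 2 ∂μ ≤ θ * n ^ P / C₄ := by
        calc ∫ y, (Φ x y) ^ 2 ∂μ = ∫ y in (Metric.closedBall x r)ᶜ, (Φ x y) ^ 2 ∂μ := hint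
        _ ≤ C₃ * n ^ P * (n * r) ^ (α - S) := hannulus x r hr
        _ = C₃ * n ^ P * (θ / (C₃ * C₄)) := by rw [hnr, hdpow]
        _ = θ * n ^ P / C₄ := by field_simp
      -- lower bound from the support point z
      have hIz : n ^ P / C₄ ≤ ⨆ w : msupport μ, ∫ y, (Φ w.1 y) ^ 2 ∂μ :=
        le_trans (hlow z hz) (le_ciSup hbdd ⟨z, hz⟩)
      have hlo : 4 * θ * (n ^ P / C₄) ≤ ∫ y, (Φ x y) ^ 2 ∂μ :=
        le_trans (by nlinarith) hx
      have hfin : 4 * θ * (n ^ P / C₄) ≤ θ * n ^ P / C₄ := le_trans hlo hup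
      have hE : 4 * θ * (n ^ P / C₄) = 4 * (θ * n ^ P / C₄) := by ring
      rw [hE] at hfin
      have hp : 0 < θ * n ^ P / C₄ := by positivity
      linarith
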